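/- On the elliptic curve $V^2 + (s + 1/s - 2)UV = U(U-1)^2$ over $\mathbb{Q}(s)$, the point $Q = (1, 0)$ has exact order $4$, and $2A = Q$ where $A = (s, s-1)$. -/

import Mathlib

noncomputable section

open WeierstrassCurve Polynomial

/-- The elliptic curve `V² + (s + 1/s - 2)UV = U(U-1)²` over `ℚ(s)`. -/
def W7 : WeierstrassCurve.Affine (RatFunc ℚ) :=
  { a₁ := RatFunc.X + 1 / RatFunc.X - 2, a₂ := -2, a₃ := 0, a₄ := 1, a₆ := 0 }

lemma hs : (RatFunc.X : RatFunc ℚ) ≠ 0 := RatFunc.X_ne_zero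

lemma hX2 : (RatFunc.X : RatFunc ℚ) ^ 2 ≠ 1 := by
  intro h
  have h' : (algebraMap ℚ[X] (RatFunc ℚ)) (X ^ 2 - 1) = 0 := by
    simp only [map_sub, map_pow, map_one, RatFunc.algebraMap_X, h, sub_self]
  have := RatFunc.algebraMap_injective ℚ (h'.trans (map_zero _).symm)
  have h2 : (X ^ 2 - 1 : ℚ[X]).coeff 2 = 0 := by rw [this]; simp
  simp [coeff_one] at h2

lemma hX1 : (RatFunc.X : RatFunc ℚ) ≠ 1 := fun h => hX2 (by rw [h]; ring)

lemma hd2 : (RatFunc.X : RatFunc ℚ) ^ 2 - 1 ≠ 0 := sub_ne_zero.mpr hX2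

lemma ha1 : (RatFunc.X : RatFunc ℚ) + 1 / RatFunc.X - 2 ≠ 0 := by
  intro h
  apply hX1
  field_simp [hs] at h
  have : ((RatFunc.X : RatFunc ℚ) - 1) ^ 2 = 0 := by linear_combination h
  have := pow_eq_zero_iff (n := 2) (by norm_num) |>.mp this
  exact sub_eq_zero.mp this

lemma some_eq_some {F : Type*} [Field F] {W : WeierstrassCurve.Affine F} {x₁ y₁ x₂ y₂ : F}
    (hx : x₁ = x₂) (hy : y₁ = y₂) {h₁ : W.Nonsingular x₁ y₁} {h₂ : W.Nonsingular x₂ y₂} :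
    WeierstrassCurve.Affine.Point.some _ _ h₁ = WeierstrassCurve.Affine.Point.some _ _ h₂ := by
  subst hx; subst hy; rfl

lemma hQns : W7.Nonsingular 1 0 := by
  refine (W7.nonsingular_iff 1 0).mpr ⟨(W7.equation_iff 1 0).mpr ?_, Or.inr ?_⟩
  · simp only [W7]; ring
  · simp only [W7]
    intro h
    exact ha1 (by linear_combination h)

lemma hAns : W7.Nonsingular RatFunc.X (RatFunc.X - 1) := by
  refine (W7.nonsingular_iff _ _).mpr ⟨(W7.equation_iff _ _).mpr ?_, Or.inr ?_⟩
  · simp only [W7]; field_simp [hs]; ring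
  · simp only [W7]
    intro h
    apply hd2
    field_simp [hs] at h
    linear_combination h

lemma h00ns : W7.Nonsingular 0 0 := by
  refine (W7.nonsingular_iff 0 0).mpr ⟨(W7.equation_iff 0 0).mpr ?_, Or.inl ?_⟩
  · simp only [W7]; ring
  · simp only [W7]; norm_num

lemma hyQ : (0 : RatFunc ℚ) ≠ W7.negY 1 0 := by
  simp only [WeierstrassCurve.Affine.negY, W7]
  intro h
  exact ha1 (by linear_combination h)

lemma hyA : RatFunc.X - 1 ≠ W7.negY RatFunc.X (RatFunc.X - 1) := by
  simp only [WeierstrassCurve.Affine.negY, W7]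
  intro h
  apply hd2
  field_simp [hs] at h
  linear_combination h

open Classical

lemma hslQ : W7.slope 1 1 0 0 = 0 := by
  rw [WeierstrassCurve.Affine.slope_of_Y_ne rfl hyQ]
  simp only [W7]
  norm_num

lemma hslA : W7.slope RatFunc.X RatFunc.X (RatFunc.X - 1) (RatFunc.X - 1)
    = (2 * RatFunc.X - 1) / RatFunc.X := by
  rw [WeierstrassCurve.Affine.slope_of_Y_ne rfl hyA]
  simp only [W7, WeierstrassCurve.Affine.negY]
  rw [div_eq_div_iff ?_ hs]
  · field_simp [hs]
    ring
  · intro h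
    apply hd2
    field_simp [hs] at h
    linear_combination h

lemma hQQ : WeierstrassCurve.Affine.Point.some _ _ hQns + WeierstrassCurve.Affine.Point.some _ _ hQns
    = WeierstrassCurve.Affine.Point.some _ _ h00ns := by
  rw [WeierstrassCurve.Affine.Point.add_of_Y_ne hyQ]
  refine some_eq_some ?_ ?_ <;> rw [hslQ] <;>
    simp only [WeierstrassCurve.Affine.addX, WeierstrassCurve.Affine.addY,
      WeierstrassCurve.Affine.negAddY, WeierstrassCurve.Affine.negY, W7] <;> ring

lemma h00_00 : WeierstrassCurve.Affine.Point.some _ _ h00ns + WeierstrassCurve.Affine.Point.some _ _ h00ns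
    = 0 := by
  refine WeierstrassCurve.Affine.Point.add_of_Y_eq rfl ?_
  simp [WeierstrassCurve.Affine.negY, W7]

lemma hAA : WeierstrassCurve.Affine.Point.some _ _ hAns + WeierstrassCurve.Affine.Point.some _ _ hAns
    = WeierstrassCurve.Affine.Point.some _ _ hQns := by
  rw [WeierstrassCurve.Affine.Point.add_of_Y_ne hyA]
  refine some_eq_some ?_ ?_ <;> rw [hslA] <;>
    simp only [WeierstrassCurve.Affine.addX, WeierstrassCurve.Affine.addY,
      WeierstrassCurve.Affine.negAddY, WeierstrassCurve.Affine.negY, W7] <;>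
    field_simp [hs] <;> ring

/-- `Q = (1,0)` has exact order 4 and `2A = Q` where `A = (s, s-1)`. -/
theorem stmt7 :
    ∃ hQ : W7.Nonsingular 1 0, ∃ hA : W7.Nonsingular RatFunc.X (RatFunc.X - 1),
      addOrderOf (WeierstrassCurve.Affine.Point.some _ _ hQ) = 4 ∧
      (2 : ℤ) • (WeierstrassCurve.Affine.Point.some _ _ hA) =
        WeierstrassCurve.Affine.Point.some _ _ hQ := by
  refine ⟨hQns, hAns, ?_, ?_⟩
  · have h2 : (2 : ℕ) • WeierstrassCurve.Affine.Point.some _ _ hQns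
        = WeierstrassCurve.Affine.Point.some _ _ h00ns := by rw [two_nsmul, hQQ]
    have h4 : (2 : ℕ) ^ 2 • WeierstrassCurve.Affine.Point.some _ _ hQns = 0 := by
      have h22 : (2 : ℕ) ^ 2 = 2 + 2 := by norm_num
      rw [h22, add_nsmul, h2, h00_00]
    have := addOrderOf_eq_prime_pow (p := 2) (n := 1)
      (x := WeierstrassCurve.Affine.Point.some _ _ hQns)
      (by rw [pow_one, h2]; exact WeierstrassCurve.Affine.Point.some_ne_zero _) h4
    simpa using this
  · rw [two_zsmul, hAA]
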